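/- If I is an intersection of finitely many maximal ideals on ℕ, then the quotient ℓ∞/c_{0,I} is finite-dimensional, and hence c_{0,I} is a complemented subspace of ℓ∞. -/

import Mathlib

open BoundedContinuousFunction

theorem exists_clm_of_maximal_ideal (J : Set (Set ℕ))
    (hdown : ∀ {A B : Set ℕ}, A ⊆ B → B ∈ J → A ∈ J)
    (hunion : ∀ {A B : Set ℕ}, A ∈ J → B ∈ J → A ∪ B ∈ J)
    (hfin : ∀ A : Set ℕ, A.Finite → A ∈ J)
    (hproper : Set.univ ∉ J)
    (hmax : ∀ A : Set ℕ, A ∈ J ∨ Aᶜ ∈ J) :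
    ∃ φ : (ℕ →ᵇ ℝ) →L[ℝ] ℝ, ∀ x : ℕ →ᵇ ℝ,
      (φ x = 0 ↔ ∀ ε > (0 : ℝ), {n | ε ≤ |x n|} ∈ J) := by
  classical
  -- the dual filter
  let F : Filter ℕ :=
    { sets := {A | Aᶜ ∈ J}
      univ_sets := by
        show Set.univᶜ ∈ J
        simpa using hfin ∅ Set.finite_empty
      sets_of_superset := fun hA hAB => hdown (Set.compl_subset_compl.mpr hAB) hA
      inter_sets := fun hA hB => by
        show _ ∈ J
        rw [Set.compl_inter]
        exact hunion hA hB }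
  have hmemF : ∀ A : Set ℕ, A ∈ F ↔ Aᶜ ∈ J := fun A => Iff.rfl
  have hcompl : ∀ s : Set ℕ, sᶜ ∉ F ↔ s ∈ F := by
    intro s
    rw [hmemF, hmemF, compl_compl]
    constructor
    · intro hs
      rcases hmax s with h | h
      · exact absurd h hs
      · exact h
    · intro h hs
      apply hproper
      have := hunion h hs
      rwa [Set.compl_union_self] at this
  let p : Ultrafilter ℕ := Ultrafilter.ofComplNotMemIff F hcompl
  have hmemp : ∀ A : Set ℕ, A ∈ p ↔ Aᶜ ∈ J := fun A => Iff.rfl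
  -- ultrafilter limits exist
  have hex : ∀ x : ℕ →ᵇ ℝ, ∃ a : ℝ, Filter.Tendsto x p (nhds a) := by
    intro x
    have hb : ∀ n, x n ∈ Set.Icc (-‖x‖) ‖x‖ := by
      intro n
      have := x.norm_coe_le_norm n
      rw [Real.norm_eq_abs, abs_le] at this
      exact this
    have hle : ↑(p.map x) ≤ Filter.principal (Set.Icc (-‖x‖) ‖x‖) := by
      rw [Filter.le_principal_iff]
      exact Filter.mem_map.mpr (Filter.univ_mem' hb)
    obtain ⟨a, _, ha⟩ := (isCompact_Icc (a := -‖x‖) (b := ‖x‖)).ultrafilter_le_nhds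
      (p.map x) hle
    exact ⟨a, ha⟩
  choose l hl using hex
  have hadd : ∀ x y : ℕ →ᵇ ℝ, l (x + y) = l x + l y := by
    intro x y
    refine tendsto_nhds_unique (hl (x + y)) ?_
    have := (hl x).add (hl y)
    rw [coe_add]; exact this
  have hsmul : ∀ (c : ℝ) (x : ℕ →ᵇ ℝ), l (c • x) = c * l x := by
    intro c x
    refine tendsto_nhds_unique (hl (c • x)) ?_
    have := (hl x).const_mul c
    simpa using this
  have hbound : ∀ x : ℕ →ᵇ ℝ, ‖l x‖ ≤ 1 * ‖x‖ := by
    intro x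
    rw [one_mul, Real.norm_eq_abs]
    have habs : Filter.Tendsto (fun n => |x n|) p (nhds |l x|) := (hl x).abs
    refine le_of_tendsto habs (Filter.Eventually.of_forall fun n => ?_)
    have := x.norm_coe_le_norm n
    rwa [Real.norm_eq_abs] at this
  let φ : (ℕ →ᵇ ℝ) →L[ℝ] ℝ :=
    LinearMap.mkContinuous
      { toFun := l
        map_add' := hadd
        map_smul' := hsmul } 1 hbound
  refine ⟨φ, fun x => ?_⟩
  have hφx : φ x = l x := rfl
  have hiff : φ x = 0 ↔ Filter.Tendsto x p (nhds 0) := by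
    rw [hφx]
    constructor
    · intro h
      rw [← h]; exact hl x
    · intro h
      exact tendsto_nhds_unique (hl x) h
  rw [hiff, Metric.tendsto_nhds]
  have hseq : ∀ ε : ℝ, {n | dist (x n) 0 < ε}ᶜ = {n | ε ≤ |x n|} := by
    intro ε
    ext n
    simp [Real.dist_0_eq_abs, not_lt]
  constructor
  · intro h ε hε
    have := h ε hε
    rw [Filter.eventually_iff] at this
    have h2 : {n | dist (x n) 0 < ε} ∈ p := this
    rw [hmemp] at h2
    rwa [hseq ε] at h2
  · intro h ε hε
    have h2 := h ε hε
    rw [Filter.eventually_iff]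
    show {n | dist (x n) 0 < ε}ᶜ ∈ J
    rwa [hseq ε]

/-- If `I` is an intersection of finitely many maximal ideals on `ℕ`, then the quotient
`ℓ∞ / c_{0,I}` is finite-dimensional, and hence `c_{0,I}` is complemented in `ℓ∞`. -/
theorem quotient_finiteDimensional_of_finite_inter_maximal
    (m : ℕ) (J : Fin m → Set (Set ℕ))
    (hdown : ∀ i, ∀ {A B : Set ℕ}, A ⊆ B → B ∈ J i → A ∈ J i)
    (hunion : ∀ i, ∀ {A B : Set ℕ}, A ∈ J i → B ∈ J i → A ∪ B ∈ J i)
    (hfin : ∀ i, ∀ A : Set ℕ, A.Finite → A ∈ J i)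
    (hproper : ∀ i, Set.univ ∉ J i)
    (hmax : ∀ i, ∀ A : Set ℕ, A ∈ J i ∨ Aᶜ ∈ J i)
    (N : Submodule ℝ (ℕ →ᵇ ℝ))
    (hN : (N : Set (ℕ →ᵇ ℝ)) =
      {x : ℕ →ᵇ ℝ | ∀ ε > (0 : ℝ), {n | ε ≤ |x n|} ∈ {A : Set ℕ | ∀ i, A ∈ J i}}) :
    FiniteDimensional ℝ ((ℕ →ᵇ ℝ) ⧸ N) ∧ N.ClosedComplemented := by
  classical
  choose φ hφ using fun i =>
    exists_clm_of_maximal_ideal (J i) (hdown i) (hunion i) (hfin i) (hproper i) (hmax i)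
  let T : (ℕ →ᵇ ℝ) →L[ℝ] (Fin m → ℝ) := ContinuousLinearMap.pi φ
  have hker : ∀ x : ℕ →ᵇ ℝ, x ∈ N ↔ T x = 0 := by
    intro x
    have hx : x ∈ N ↔ x ∈ (N : Set (ℕ →ᵇ ℝ)) := Iff.rfl
    rw [hx, hN]
    simp only [Set.mem_setOf_eq]
    rw [funext_iff]
    constructor
    · intro h i
      show φ i x = 0
      rw [hφ i x]
      intro ε hε
      exact h ε hε i
    · intro h ε hε i
      have := (hφ i x).mp (h i)
      exact this ε hε
  have hNker : N = LinearMap.ker (T : (ℕ →ᵇ ℝ) →ₗ[ℝ] (Fin m → ℝ)) := by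
    ext x
    rw [hker x]
    exact (LinearMap.mem_ker).symm
  have hfd : FiniteDimensional ℝ ((ℕ →ᵇ ℝ) ⧸ N) := by
    rw [hNker]
    have hker2 : LinearMap.ker (T : (ℕ →ᵇ ℝ) →ₗ[ℝ] (Fin m → ℝ)) = LinearMap.ker (T : (ℕ →ᵇ ℝ) →ₗ[ℝ] (Fin m → ℝ)) := rfl
    rw [hker2]
    exact LinearEquiv.finiteDimensional
      (LinearMap.quotKerEquivRange (T : (ℕ →ᵇ ℝ) →ₗ[ℝ] (Fin m → ℝ))).symm
  refine ⟨hfd, ?_⟩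
  let S : Submodule ℝ (Fin m → ℝ) := LinearMap.range (T : (ℕ →ᵇ ℝ) →ₗ[ℝ] (Fin m → ℝ))
  let T₀ : (ℕ →ᵇ ℝ) →L[ℝ] S :=
    T.codRestrict S (fun x => LinearMap.mem_range_self _ x)
  have hsurj : Function.Surjective T₀ := by
    rintro ⟨y, hy⟩
    obtain ⟨x, hx⟩ := hy
    exact ⟨x, Subtype.ext hx⟩
  obtain ⟨g, hg⟩ := (T₀ : (ℕ →ᵇ ℝ) →ₗ[ℝ] S).exists_rightInverse_of_surjective
    (LinearMap.range_eq_top.mpr hsurj)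
  let G : S →L[ℝ] (ℕ →ᵇ ℝ) := LinearMap.toContinuousLinearMap g
  have hri : Function.RightInverse G T₀ := by
    intro y
    have := LinearMap.congr_fun hg y
    exact (by simpa using this : T₀ (g y) = y)
  have hcc := ContinuousLinearMap.closedComplemented_ker_of_rightInverse T₀ G hri
  have hkerT₀ : LinearMap.ker (T₀ : (ℕ →ᵇ ℝ) →ₗ[ℝ] S) = N := by
    ext x
    rw [hker x, LinearMap.mem_ker]
    constructor
    · intro h
      have : T₀ x = 0 := h
      have h2 : (T₀ x : Fin m → ℝ) = 0 := by rw [this]; rfl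
      exact h2
    · intro h
      exact Subtype.ext h
  rwa [hkerT₀] at hcc
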